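/- Let G be a graph in which the copies of K₃ form a single K₃-component (the edge-intersection graph of triangles is connected and covers all edges), and suppose u, w, v are vertices with uw, vw ∈ E(G) and uv ∉ E(G). Then G contains a subgraph J such that either J has 6 vertices and 9 edges, or J together with the extra edge uv is isomorphic to K₄ or to W₅ (the graph obtained from C₄ by adding a universal vertex). -/

import Mathlib

/-- `t` is (the vertex set of) a triangle of `G`. -/
def IsTriangle {V : Type*} [DecidableEq V] (G : SimpleGraph V) (t : Finset V) : Prop :=
  t.card = 3 ∧ ∀ a ∈ t, ∀ b ∈ t, a ≠ b → G.Adj a b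

/-- Two triangles of `G` are adjacent in the edge-intersection graph iff they share
an edge, i.e. at least two vertices. -/
def TriAdj {V : Type*} [DecidableEq V] (G : SimpleGraph V) (t₁ t₂ : Finset V) : Prop :=
  IsTriangle G t₁ ∧ IsTriangle G t₂ ∧ 2 ≤ (t₁ ∩ t₂).card

/-- The 5-vertex wheel `W₅`: a 4-cycle on `{0,1,2,3}` plus the universal vertex `4`. -/
def W5 : SimpleGraph (Fin 5) :=
  SimpleGraph.fromRel (fun a b => (a.1 < 4 ∧ b.1 = (a.1 + 1) % 4) ∨ b = 4)

/- ----------------------------------------------------------------- auxiliary -/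

def mkSub {V : Type*} (G : SimpleGraph V) (U : Set V) (E : Set (Sym2 V))
    (hE : E ⊆ G.edgeSet) (hsupp : ∀ e ∈ E, ∀ x ∈ e, x ∈ U) : G.Subgraph where
  verts := U
  Adj a b := s(a, b) ∈ E
  adj_sub h := (SimpleGraph.mem_edgeSet G).mp (hE h)
  edge_vert h := hsupp _ h _ (Sym2.mem_mk_left _ _)
  symm := ⟨fun a b (h : s(a, b) ∈ E) => show s(b, a) ∈ E by rwa [Sym2.eq_swap]⟩

lemma mkSub_edgeSet {V : Type*} (G : SimpleGraph V) (U : Set V) (E : Set (Sym2 V))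
    (hE : E ⊆ G.edgeSet) (hsupp : ∀ e ∈ E, ∀ x ∈ e, x ∈ U) :
    (mkSub G U E hE hsupp).edgeSet = E := by
  ext e
  induction e using Sym2.ind with
  | _ a b => simp [mkSub, SimpleGraph.Subgraph.mem_edgeSet]

lemma triangle_third {V : Type*} [DecidableEq V] {G : SimpleGraph V} {t : Finset V} {a b : V}
    (hT : IsTriangle G t) (ha : a ∈ t) (hb : b ∈ t) (hab : a ≠ b) :
    ∃ c, c ∈ t ∧ c ≠ a ∧ c ≠ b ∧ t = {a, b, c} ∧ G.Adj a c ∧ G.Adj b c := by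
  obtain ⟨hcard, hadj⟩ := hT
  have hsub : {a, b} ⊆ t := by
    intro z hz; rcases Finset.mem_insert.mp hz with rfl | hz
    · exact ha
    · exact (Finset.mem_singleton.mp hz) ▸ hb
  have hab2 : ({a, b} : Finset V).card = 2 := by
    rw [Finset.card_insert_of_notMem (by simpa using hab), Finset.card_singleton]
  have h1 : (t \ {a, b}).card = 1 := by
    rw [Finset.card_sdiff_of_subset hsub, hcard, hab2]
  obtain ⟨c, hc⟩ := Finset.card_eq_one.mp h1
  have hcmem : c ∈ t \ {a, b} := hc ▸ Finset.mem_singleton_self c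
  obtain ⟨hct, hcab⟩ := Finset.mem_sdiff.mp hcmem
  have hca : c ≠ a := fun h => hcab (by simp [h])
  have hcb : c ≠ b := fun h => hcab (by simp [h])
  refine ⟨c, hct, hca, hcb, ?_, hadj a ha c hct hca.symm, hadj b hb c hct hcb.symm⟩
  have hsub3 : ({a, b, c} : Finset V) ⊆ t := by
    intro z hz
    rcases Finset.mem_insert.mp hz with rfl | hz
    · exact ha
    rcases Finset.mem_insert.mp hz with rfl | hz
    · exact hb
    · exact (Finset.mem_singleton.mp hz) ▸ hct
  refine (Finset.eq_of_subset_of_card_le hsub3 ?_).symm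
  rw [hcard]
  have : ({a, b, c} : Finset V).card = 3 := by
    rw [Finset.card_insert_of_notMem (by simp [hab, hca.symm]),
      Finset.card_insert_of_notMem (by simp [hcb.symm]), Finset.card_singleton]
  omega

lemma mem_triE {V : Type*} [DecidableEq V] {a b c p q : V}
    (hp : p ∈ ({a, b, c} : Finset V)) (hq : q ∈ ({a, b, c} : Finset V)) (hpq : p ≠ q) :
    s(p, q) ∈ ({s(a, b), s(a, c), s(b, c)} : Finset (Sym2 V)) := by
  simp only [Finset.mem_insert, Finset.mem_singleton] at hp hq ⊢
  rcases hp with rfl | rfl | rfl <;> rcases hq with rfl | rfl | rfl <;>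
    simp_all [Sym2.eq, Sym2.rel_iff', Prod.ext_iff]

lemma path_union {V : Type*} [DecidableEq V] {G : SimpleGraph V} {t t' : Finset V}
    (h : Relation.ReflTransGen (TriAdj G) t t') (ht : IsTriangle G t) :
    ∃ (U : Finset V) (E : Finset (Sym2 V)),
      (∀ e ∈ E, e ∈ G.edgeSet) ∧ (∀ e ∈ E, ∀ x ∈ e, x ∈ U) ∧
      ((U.card = 6 ∧ 9 ≤ E.card) ∨
       (U.card ≤ 5 ∧ 2 * U.card ≤ E.card + 3 ∧ t ⊆ U ∧ t' ⊆ U ∧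
        (∀ a ∈ t, ∀ b ∈ t, a ≠ b → s(a, b) ∈ E) ∧
        (∀ a ∈ t', ∀ b ∈ t', a ≠ b → s(a, b) ∈ E))) := by
  induction h with
  | refl =>
    obtain ⟨hc3, hadj⟩ := ht
    obtain ⟨a, b, c, hab, hac, hbc, rfl⟩ := Finset.card_eq_three.mp hc3
    refine ⟨{a, b, c}, {s(a, b), s(a, c), s(b, c)}, ?_, ?_,
      Or.inr ⟨?_, ?_, le_refl _, le_refl _, ?_, ?_⟩⟩
    · intro e he
      simp only [Finset.mem_insert, Finset.mem_singleton] at he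
      rcases he with rfl | rfl | rfl <;> rw [SimpleGraph.mem_edgeSet] <;>
        [exact hadj a (by simp) b (by simp) hab;
         exact hadj a (by simp) c (by simp) hac;
         exact hadj b (by simp) c (by simp) hbc]
    · intro e he x hx
      simp only [Finset.mem_insert, Finset.mem_singleton] at he
      rcases he with rfl | rfl | rfl <;> rcases Sym2.mem_iff.mp hx with rfl | rfl <;> simp
    · have : ({a, b, c} : Finset V).card = 3 := hc3
      omega
    · have h3 : ({a, b, c} : Finset V).card = 3 := hc3
      have hn1 : s(a, b) ∉ ({s(a, c), s(b, c)} : Finset (Sym2 V)) := by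
        intro hmem
        simp only [Finset.mem_insert, Finset.mem_singleton, Sym2.eq, Sym2.rel_iff',
          Prod.ext_iff, Prod.swap_prod_mk] at hmem
        tauto
      have hn2 : s(a, c) ∉ ({s(b, c)} : Finset (Sym2 V)) := by
        intro hmem
        simp only [Finset.mem_singleton, Sym2.eq, Sym2.rel_iff', Prod.ext_iff,
          Prod.swap_prod_mk] at hmem
        tauto
      have hE : ({s(a, b), s(a, c), s(b, c)} : Finset (Sym2 V)).card = 3 := by
        rw [Finset.card_insert_of_notMem hn1, Finset.card_insert_of_notMem hn2,
          Finset.card_singleton]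
      omega
    · exact fun p hp q hq hpq => mem_triE hp hq hpq
    · exact fun p hp q hq hpq => mem_triE hp hq hpq
  | @tail b t'' h' step ih =>
    obtain ⟨U, E, hEedge, hsupp, hcase⟩ := ih
    obtain ⟨hTb, hTt'', hshare⟩ := step
    rcases hcase with h6 | ⟨hU5, hinv, htU, hbU, htE, hbE⟩
    · exact ⟨U, E, hEedge, hsupp, Or.inl h6⟩
    · obtain ⟨p, hp, q, hq, hpq⟩ := Finset.one_lt_card.mp hshare
      have hpb : p ∈ b := (Finset.mem_inter.mp hp).1
      have hpt'' : p ∈ t'' := (Finset.mem_inter.mp hp).2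
      have hqb : q ∈ b := (Finset.mem_inter.mp hq).1
      have hqt'' : q ∈ t'' := (Finset.mem_inter.mp hq).2
      have hpU : p ∈ U := hbU hpb
      have hqU : q ∈ U := hbU hqb
      obtain ⟨c, hct'', hcp, hcq, ht''eq, hpc, hqc⟩ := triangle_third hTt'' hpt'' hqt'' hpq
      have hpqadj : G.Adj p q := hTt''.2 p hpt'' q hqt'' hpq
      set U' : Finset V := insert c U with hU'
      set E' : Finset (Sym2 V) := insert s(p, c) (insert s(q, c) (insert s(p, q) E)) with hE'
      have hEsub : E ⊆ E' := by
        intro e he; simp only [hE', Finset.mem_insert]; tauto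
      have hEedge' : ∀ e ∈ E', e ∈ G.edgeSet := by
        intro e he
        simp only [hE', Finset.mem_insert] at he
        rcases he with rfl | rfl | rfl | he
        · exact hpc
        · exact hqc
        · exact hpqadj
        · exact hEedge e he
      have hsupp' : ∀ e ∈ E', ∀ x ∈ e, x ∈ U' := by
        intro e he x hx
        simp only [hE', Finset.mem_insert] at he
        rcases he with rfl | rfl | rfl | he <;>
          [skip; skip; skip; exact Finset.mem_insert_of_mem (hsupp e he x hx)] <;>
          rcases Sym2.mem_iff.mp hx with rfl | rfl <;>
          simp [hU', hpU, hqU, Finset.mem_insert_of_mem]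
      have ht''U' : t'' ⊆ U' := by
        rw [ht''eq]
        intro z hz
        simp only [Finset.mem_insert, Finset.mem_singleton] at hz
        rcases hz with rfl | rfl | rfl
        · exact Finset.mem_insert_of_mem hpU
        · exact Finset.mem_insert_of_mem hqU
        · exact Finset.mem_insert_self _ _
      have ht''E' : ∀ a ∈ t'', ∀ b' ∈ t'', a ≠ b' → s(a, b') ∈ E' := by
        intro z hz z' hz' hzz'
        rw [ht''eq] at hz hz'
        have := mem_triE hz hz' hzz'
        simp only [Finset.mem_insert, Finset.mem_singleton] at this
        simp only [hE', Finset.mem_insert]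
        tauto
      by_cases hcU : c ∈ U
      · have hU'eq : U' = U := Finset.insert_eq_self.mpr hcU
        refine ⟨U, E', hEedge', by rwa [hU'eq] at hsupp',
          Or.inr ⟨hU5, ?_, htU, by rwa [hU'eq] at ht''U',
            fun a ha b' hb' hab' => hEsub (htE a ha b' hb' hab'), ht''E'⟩⟩
        have := Finset.card_le_card hEsub
        omega
      · have hnc1 : s(p, c) ∉ E := fun hmem => hcU (hsupp _ hmem c (by simp))
        have hnc2 : s(q, c) ∉ E := fun hmem => hcU (hsupp _ hmem c (by simp))
        have hne : s(p, c) ≠ s(q, c) := by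
          simp [Sym2.eq, Sym2.rel_iff', Prod.ext_iff, hpq, hcq.symm]
          tauto
        have hE2sub : insert s(p, c) (insert s(q, c) E) ⊆ E' := by
          intro e he; simp only [hE', Finset.mem_insert] at he ⊢; tauto
        have hE2card : (insert s(p, c) (insert s(q, c) E)).card = E.card + 2 := by
          rw [Finset.card_insert_of_notMem, Finset.card_insert_of_notMem hnc2]
          simp only [Finset.mem_insert]
          push_neg
          exact ⟨hne, hnc1⟩
        have hE'card : E.card + 2 ≤ E'.card := hE2card ▸ Finset.card_le_card hE2sub
        have hU'card : U'.card = U.card + 1 := Finset.card_insert_of_notMem hcU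
        have htU' : t ⊆ U' := fun z hz => Finset.mem_insert_of_mem (htU hz)
        have htE' : ∀ a ∈ t, ∀ b' ∈ t, a ≠ b' → s(a, b') ∈ E' :=
          fun a ha b' hb' hab' => hEsub (htE a ha b' hb' hab')
        by_cases h5 : U'.card ≤ 5
        · exact ⟨U', E', hEedge', hsupp', Or.inr ⟨h5, by omega, htU', ht''U', htE', ht''E'⟩⟩
        · refine ⟨U', E', hEedge', hsupp', Or.inl ⟨by omega, by omega⟩⟩

instance : DecidableRel W5.Adj := fun a b =>
  decidable_of_iff _ (SimpleGraph.fromRel_adj _ a b).symm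

lemma K4_edgeSet : (⊤ : SimpleGraph (Fin 4)).edgeSet =
    {s(0,1), s(0,2), s(0,3), s(1,2), s(1,3), s(2,3)} := by
  ext e
  induction e using Sym2.ind with
  | _ a b =>
    fin_cases a <;> fin_cases b <;>
      simp [SimpleGraph.mem_edgeSet, Sym2.eq, Sym2.rel_iff'] <;> decide

lemma W5_edgeSet : W5.edgeSet =
    {s(0,1), s(1,2), s(2,3), s(0,3), s(0,4), s(1,4), s(2,4), s(3,4)} := by
  ext e
  induction e using Sym2.ind with
  | _ a b =>
    simp only [SimpleGraph.mem_edgeSet, Set.mem_insert_iff, Set.mem_singleton_iff, Sym2.eq,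
      Sym2.rel_iff', Prod.mk.injEq, Prod.swap_prod_mk]
    revert a b; decide

lemma K4_witness {V : Type*} (G : SimpleGraph V) {u v r t : V}
    (huv : u ≠ v) (hur : G.Adj u r) (hut : G.Adj u t) (hvr : G.Adj v r) (hvt : G.Adj v t)
    (hrt : G.Adj r t) :
    ∃ J : G.Subgraph, ∃ f : Fin 4 → V, Function.Injective f ∧ J.verts = Set.range f ∧
      J.edgeSet ∪ {s(u, v)} = Sym2.map f '' (⊤ : SimpleGraph (Fin 4)).edgeSet := by
  have hE : ({s(u,r), s(u,t), s(v,r), s(v,t), s(r,t)} : Set (Sym2 V)) ⊆ G.edgeSet := by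
    intro e he
    rcases he with rfl | rfl | rfl | rfl | rfl <;> assumption
  have hsupp : ∀ e ∈ ({s(u,r), s(u,t), s(v,r), s(v,t), s(r,t)} : Set (Sym2 V)),
      ∀ x ∈ e, x ∈ ({u, v, r, t} : Set V) := by
    intro e he x hx
    rcases he with rfl | rfl | rfl | rfl | rfl <;> rcases Sym2.mem_iff.mp hx with rfl | rfl <;> simp
  refine ⟨mkSub G _ _ hE hsupp, ![u, v, r, t], ?_, ?_, ?_⟩
  · intro a b hab
    fin_cases a <;> fin_cases b <;> simp_all [huv, hur.ne, hut.ne, hvr.ne, hvt.ne, hrt.ne,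
      hur.ne', hut.ne', hvr.ne', hvt.ne', hrt.ne', huv.symm]
  · show ({u, v, r, t} : Set V) = _
    ext z
    constructor
    · intro hz
      rcases hz with rfl | rfl | rfl | rfl
      · exact ⟨0, rfl⟩
      · exact ⟨1, rfl⟩
      · exact ⟨2, rfl⟩
      · exact ⟨3, rfl⟩
    · rintro ⟨i, rfl⟩
      fin_cases i <;> simp
  · rw [mkSub_edgeSet, K4_edgeSet]
    rw [Set.image_insert_eq, Set.image_insert_eq, Set.image_insert_eq, Set.image_insert_eq,
      Set.image_insert_eq, Set.image_singleton]
    simp only [Sym2.map_pair_eq, Matrix.cons_val_zero, Matrix.cons_val_one, Matrix.head_cons,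
      Matrix.cons_val_two, Matrix.tail_cons, Matrix.cons_val_three]
    ext e
    simp only [Set.mem_union, Set.mem_insert_iff, Set.mem_singleton_iff]
    tauto

set_option maxHeartbeats 1000000 in
lemma W5_witness {V : Type*} (G : SimpleGraph V) {u v x y w : V}
    (huv : u ≠ v) (hux : u ≠ x) (huy : u ≠ y) (huw : u ≠ w)
    (hvx : v ≠ x) (hvy : v ≠ y) (hvw : v ≠ w)
    (hxy : x ≠ y) (hxw : x ≠ w) (hyw : y ≠ w)
    (avy : G.Adj v y) (ayx : G.Adj y x) (aux : G.Adj u x)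
    (auw : G.Adj u w) (avw : G.Adj v w) (ayw : G.Adj y w) (axw : G.Adj x w) :
    ∃ J : G.Subgraph, ∃ f : Fin 5 → V, Function.Injective f ∧ J.verts = Set.range f ∧
      J.edgeSet ∪ {s(u, v)} = Sym2.map f '' W5.edgeSet := by
  have hE : ({s(v,y), s(y,x), s(u,x), s(u,w), s(v,w), s(y,w), s(x,w)} : Set (Sym2 V)) ⊆
      G.edgeSet := by
    intro e he
    rcases he with rfl | rfl | rfl | rfl | rfl | rfl | rfl <;> assumption
  have hsupp : ∀ e ∈ ({s(v,y), s(y,x), s(u,x), s(u,w), s(v,w), s(y,w), s(x,w)} : Set (Sym2 V)),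
      ∀ z ∈ e, z ∈ ({u, v, y, x, w} : Set V) := by
    intro e he z hz
    rcases he with rfl | rfl | rfl | rfl | rfl | rfl | rfl <;>
      rcases Sym2.mem_iff.mp hz with rfl | rfl <;> simp
  refine ⟨mkSub G _ _ hE hsupp, ![u, v, y, x, w], ?_, ?_, ?_⟩
  · intro a b hab
    fin_cases a <;> fin_cases b <;>
      simp only [Matrix.cons_val_zero, Matrix.cons_val_one, Matrix.head_cons,
        Matrix.cons_val_two, Matrix.tail_cons, Matrix.cons_val_three,
        Matrix.cons_val_four] at hab <;>
      first
        | rfl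
        | exact absurd hab huv | exact absurd hab.symm huv
        | exact absurd hab hux | exact absurd hab.symm hux
        | exact absurd hab huy | exact absurd hab.symm huy
        | exact absurd hab huw | exact absurd hab.symm huw
        | exact absurd hab hvx | exact absurd hab.symm hvx
        | exact absurd hab hvy | exact absurd hab.symm hvy
        | exact absurd hab hvw | exact absurd hab.symm hvw
        | exact absurd hab hxy | exact absurd hab.symm hxy
        | exact absurd hab hxw | exact absurd hab.symm hxw
        | exact absurd hab hyw | exact absurd hab.symm hyw
  · show ({u, v, y, x, w} : Set V) = _
    ext z
    constructor
    · intro hz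
      rcases hz with rfl | rfl | rfl | rfl | rfl
      · exact ⟨0, rfl⟩
      · exact ⟨1, rfl⟩
      · exact ⟨2, rfl⟩
      · exact ⟨3, rfl⟩
      · exact ⟨4, rfl⟩
    · rintro ⟨i, rfl⟩
      fin_cases i <;> simp
  · rw [mkSub_edgeSet, W5_edgeSet]
    rw [Set.image_insert_eq, Set.image_insert_eq, Set.image_insert_eq, Set.image_insert_eq,
      Set.image_insert_eq, Set.image_insert_eq, Set.image_insert_eq, Set.image_singleton]
    simp only [Sym2.map_pair_eq, Matrix.cons_val_zero, Matrix.cons_val_one, Matrix.head_cons,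
      Matrix.cons_val_two, Matrix.tail_cons, Matrix.cons_val_three, Matrix.cons_val_four]
    ext e
    simp only [Set.mem_union, Set.mem_insert_iff, Set.mem_singleton_iff]
    tauto

set_option maxHeartbeats 1000000 in
/-- Let `G` be a graph whose triangles form a single `K₃`-component:
every edge lies in a triangle and the edge-intersection graph of the triangles is
connected.  If `uw, vw ∈ E(G)` and `uv ∉ E(G)`, then `G` contains a subgraph `J`
such that either `J` has 6 vertices and 9 edges, or `J` plus the extra edge `uv`
is isomorphic to `K₄` or to `W₅`. -/
theorem K3_component_structure {V : Type*} [Fintype V] [DecidableEq V]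
    (G : SimpleGraph V)
    (hcover : ∀ e ∈ G.edgeSet, ∃ t : Finset V, IsTriangle G t ∧ ∀ x ∈ e, x ∈ t)
    (hconn : ∀ t t' : Finset V, IsTriangle G t → IsTriangle G t' →
      Relation.ReflTransGen (TriAdj G) t t')
    (u v w : V) (huv : u ≠ v)
    (huw : G.Adj u w) (hvw : G.Adj v w) (hnuv : ¬ G.Adj u v) :
    ∃ J : G.Subgraph,
      (J.verts.ncard = 6 ∧ J.edgeSet.ncard = 9) ∨
      (∃ f : Fin 4 → V, Function.Injective f ∧ J.verts = Set.range f ∧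
        J.edgeSet ∪ {s(u, v)} = Sym2.map f '' (⊤ : SimpleGraph (Fin 4)).edgeSet) ∨
      (∃ f : Fin 5 → V, Function.Injective f ∧ J.verts = Set.range f ∧
        J.edgeSet ∪ {s(u, v)} = Sym2.map f '' W5.edgeSet) := by
  obtain ⟨t1, ht1, ht1mem⟩ := hcover s(u, w) huw
  have hu1 : u ∈ t1 := ht1mem u (Sym2.mem_mk_left u w)
  have hw1 : w ∈ t1 := ht1mem w (Sym2.mem_mk_right u w)
  obtain ⟨x, hx1, hxu, hxw, ht1eq, aux, awx⟩ := triangle_third ht1 hu1 hw1 huw.ne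
  obtain ⟨t2, ht2, ht2mem⟩ := hcover s(v, w) hvw
  have hv2 : v ∈ t2 := ht2mem v (Sym2.mem_mk_left v w)
  have hw2 : w ∈ t2 := ht2mem w (Sym2.mem_mk_right v w)
  obtain ⟨y, hy2, hyv, hyw, ht2eq, avy, awy⟩ := triangle_third ht2 hv2 hw2 hvw.ne
  have hxv : x ≠ v := fun h => hnuv (h ▸ aux)
  have hyu : y ≠ u := fun h => hnuv ((h ▸ avy).symm : G.Adj u v)
  by_cases hxy0 : x = y
  · obtain ⟨J, f, h1, h2, h3⟩ :=
      K4_witness G huv huw aux hvw (by rw [hxy0]; exact avy) awx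
    exact ⟨J, Or.inr (Or.inl ⟨f, h1, h2, h3⟩)⟩
  by_cases haxy : G.Adj x y
  · obtain ⟨J, f, h1, h2, h3⟩ :=
      W5_witness G huv hxu.symm hyu.symm huw.ne hxv.symm hyv.symm hvw.ne hxy0 hxw hyw
        avy haxy.symm aux huw hvw awy.symm awx.symm
    exact ⟨J, Or.inr (Or.inr ⟨f, h1, h2, h3⟩)⟩
  by_cases hauy : G.Adj u y
  · obtain ⟨J, f, h1, h2, h3⟩ := K4_witness G huv huw hauy hvw avy awy
    exact ⟨J, Or.inr (Or.inl ⟨f, h1, h2, h3⟩)⟩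
  by_cases havx : G.Adj v x
  · obtain ⟨J, f, h1, h2, h3⟩ := K4_witness G huv huw aux hvw havx awx
    exact ⟨J, Or.inr (Or.inl ⟨f, h1, h2, h3⟩)⟩
  obtain ⟨U, E, hEedge, hsupp, hcase⟩ := path_union (hconn t1 t2 ht1 ht2) ht1
  rcases hcase with ⟨hU6, hE9⟩ | ⟨hU5, hinv, ht1U, ht2U, ht1E, ht2E⟩
  · obtain ⟨E9, hE9sub, hE9card⟩ := Finset.exists_subset_card_eq hE9
    have hE9edge : (↑E9 : Set (Sym2 V)) ⊆ G.edgeSet := by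
      intro e he
      exact hEedge e (hE9sub he)
    have hE9supp : ∀ e ∈ (↑E9 : Set (Sym2 V)), ∀ z ∈ e, z ∈ (↑U : Set V) := by
      intro e he z hz
      exact hsupp e (hE9sub he) z hz
    refine ⟨mkSub G ↑U ↑E9 hE9edge hE9supp, Or.inl ⟨?_, ?_⟩⟩
    · show (↑U : Set V).ncard = 6
      rw [Set.ncard_coe_finset]
      exact hU6
    · rw [mkSub_edgeSet, Set.ncard_coe_finset]
      exact hE9card
  · exfalso
    have hSU : ({u, v, w, x, y} : Finset V) ⊆ U := by
      intro z hz
      simp only [Finset.mem_insert, Finset.mem_singleton] at hz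
      rcases hz with rfl | rfl | rfl | rfl | rfl
      · exact ht1U hu1
      · exact ht2U hv2
      · exact ht1U hw1
      · exact ht1U hx1
      · exact ht2U hy2
    have hScard : ({u, v, w, x, y} : Finset V).card = 5 := by
      rw [Finset.card_insert_of_notMem (by simp [huv, huw.ne, hxu.symm, hyu.symm]),
        Finset.card_insert_of_notMem (by simp [hvw.ne, hxv.symm, hyv.symm]),
        Finset.card_insert_of_notMem (by simp [hxw.symm, hyw.symm]),
        Finset.card_insert_of_notMem (by simp [hxy0]), Finset.card_singleton]
    have hUeq : U = {u, v, w, x, y} :=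
      (Finset.eq_of_subset_of_card_le hSU (by rw [hScard]; exact hU5)).symm
    have hUcard : U.card = 5 := by rw [hUeq]; exact hScard
    have hE7 : 7 ≤ E.card := by omega
    set F : Finset (Sym2 V) := {s(u,w), s(u,x), s(w,x), s(v,w), s(v,y), s(w,y)} with hF
    have hEF : E ⊆ F := by
      intro e he
      revert he
      induction e using Sym2.ind with
      | _ a b =>
        intro he
        have hadj : G.Adj a b := hEedge _ he
        have ha : a ∈ U := hsupp _ he a (Sym2.mem_mk_left a b)
        have hb : b ∈ U := hsupp _ he b (Sym2.mem_mk_right a b)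
        rw [hUeq] at ha hb
        simp only [Finset.mem_insert, Finset.mem_singleton] at ha hb
        rcases ha with rfl | rfl | rfl | rfl | rfl <;> rcases hb with rfl | rfl | rfl | rfl | rfl <;>
          first
            | exact absurd hadj (G.irrefl)
            | exact absurd hadj hnuv
            | exact absurd hadj.symm hnuv
            | exact absurd hadj haxy
            | exact absurd hadj.symm haxy
            | exact absurd hadj hauy
            | exact absurd hadj.symm hauy
            | exact absurd hadj havx
            | exact absurd hadj.symm havx
            | simp [hF, Sym2.eq, Sym2.rel_iff', Prod.ext_iff]
    have hF6 : F.card ≤ 6 := by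
      refine le_trans (Finset.card_insert_le _ _) ?_
      refine Nat.succ_le_succ ?_
      refine le_trans (Finset.card_insert_le _ _) ?_
      refine Nat.succ_le_succ ?_
      refine le_trans (Finset.card_insert_le _ _) ?_
      refine Nat.succ_le_succ ?_
      refine le_trans (Finset.card_insert_le _ _) ?_
      refine Nat.succ_le_succ ?_
      refine le_trans (Finset.card_insert_le _ _) ?_
      simp
    have := Finset.card_le_card hEF
    omega
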